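/- Let T be an N×N positive semidefinite Hermitian matrix with orthonormal eigenbasis {e_i}_{i=1}^N and eigenvalues {λ_i}, and let I₊ = {i : λ_i > 0}. For a vector v ∈ ℂ^N, the (N+1)×(N+1) bordered matrix [[T, v],[v*, 1]] has the same rank as T if and only if v = Σ_{i ∈ I₊} a_i √λ_i e_i for some scalars {a_i}_{i ∈ I₊} with Σ_{i ∈ I₊} |a_i|² = 1. -/

import Mathlib

open scoped BigOperators
open Matrix

/-- The induced outer product `φφ*` of a vector `φ ∈ ℂ^N`. -/
noncomputable def outerProd {N : ℕ} (φ : Fin N → ℂ) : Matrix (Fin N) (Fin N) ℂ :=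
  Matrix.of fun i j => φ i * star (φ j)

/-- The Frobenius inner product `⟨S,T⟩_F = Tr(T* S)`. -/
noncomputable def frob {N : ℕ} (S T : Matrix (Fin N) (Fin N) ℂ) : ℂ :=
  Matrix.trace (T.conjTranspose * S)

/-- The standard inner product on `ℂ^N`. -/
noncomputable def cip {N : ℕ} (φ ψ : Fin N → ℂ) : ℂ :=
  ∑ i, φ i * star (ψ i)


lemma aux_rank_compl {n : Type*} [Fintype n] [DecidableEq n] (X : Matrix n n ℂ)
    {W : Type*} [AddCommGroup W] [Module ℂ W] [FiniteDimensional ℂ W]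
    (Φ : W →ₗ[ℂ] (n → ℂ)) (hinj : Function.Injective Φ)
    (hrange : LinearMap.range Φ = LinearMap.ker X.mulVecLin) :
    X.rank + Module.finrank ℂ W = Fintype.card n := by
  have h1 := LinearMap.finrank_range_add_finrank_ker X.mulVecLin
  have h2 : Module.finrank ℂ (LinearMap.ker X.mulVecLin) = Module.finrank ℂ W := by
    rw [← hrange, LinearMap.finrank_range_of_inj hinj]
  rw [Matrix.rank, ← h2, h1, Module.finrank_fintype_fun_eq_card]

lemma aux_rank_blockdiag_one {n : Type*} [Fintype n] [DecidableEq n] (A : Matrix n n ℂ) :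
    (fromBlocks A 0 0 (1 : Matrix Unit Unit ℂ)).rank = A.rank + 1 := by
  classical
  set f := (fromBlocks A 0 0 (1 : Matrix Unit Unit ℂ)).mulVecLin with hf
  -- extension linear map
  let ext : (n → ℂ) →ₗ[ℂ] (n ⊕ Unit → ℂ) :=
    { toFun := fun y => Sum.elim y 0
      map_add' := by intro x y; funext i; cases i <;> simp
      map_smul' := by intro c x; funext i; cases i <;> simp }
  let Φ : (LinearMap.ker A.mulVecLin) →ₗ[ℂ] (n ⊕ Unit → ℂ) :=
    ext.comp (LinearMap.ker A.mulVecLin).subtype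
  have hinj : Function.Injective Φ := by
    intro x y h
    ext i
    have := congrFun (congrArg (fun g => g) h) (Sum.inl i)
    simpa [Φ, ext] using this
  have hrange : LinearMap.range Φ = LinearMap.ker f := by
    apply le_antisymm
    · rintro _ ⟨⟨x, hx⟩, rfl⟩
      simp only [LinearMap.mem_ker, hf]
      show (fromBlocks A 0 0 (1 : Matrix Unit Unit ℂ)) *ᵥ (Sum.elim x 0) = 0
      rw [fromBlocks_mulVec]
      have hx0 : A *ᵥ x = 0 := hx
      simp [Sum.elim_comp_inl, Sum.elim_comp_inr, hx0]
    · intro x hx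
      have hx' : (fromBlocks A 0 0 (1 : Matrix Unit Unit ℂ)) *ᵥ x = 0 := hx
      rw [← Sum.elim_comp_inl_inr x, fromBlocks_mulVec] at hx'
      have h1 : A *ᵥ (x ∘ Sum.inl) = 0 := by
        funext i
        simpa using congrFun hx' (Sum.inl i)
      have h2 : (x ∘ Sum.inr) = 0 := by
        funext u
        have := congrFun hx' (Sum.inr u)
        simpa [Matrix.one_mulVec] using this
      refine ⟨⟨x ∘ Sum.inl, h1⟩, ?_⟩
      show Sum.elim (x ∘ Sum.inl) 0 = x
      rw [← h2]
      exact Sum.elim_comp_inl_inr x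
  have key := aux_rank_compl (fromBlocks A 0 0 (1 : Matrix Unit Unit ℂ)) Φ hinj hrange
  have key2 := aux_rank_compl A (LinearMap.ker A.mulVecLin).subtype
    (Submodule.injective_subtype _) (Submodule.range_subtype _)
  rw [Fintype.card_sum, Fintype.card_unit] at key
  omega



lemma aux_rank_border {N : ℕ} (T : Matrix (Fin N) (Fin N) ℂ) (v : Fin N → ℂ) :
    (Matrix.fromBlocks T (Matrix.of fun i (_ : Unit) => v i)
        (Matrix.of fun (_ : Unit) j => star (v j)) (Matrix.of fun _ _ => (1 : ℂ))).rank =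
      (T - outerProd v).rank + 1 := by
  classical
  set B : Matrix (Fin N) Unit ℂ := Matrix.of fun i (_ : Unit) => v i with hB
  set C : Matrix Unit (Fin N) ℂ := Matrix.of fun (_ : Unit) j => star (v j) with hC
  have h1 : (Matrix.of fun (_ : Unit) (_ : Unit) => (1 : ℂ)) = (1 : Matrix Unit Unit ℂ) := by
    ext i j
    simp [Matrix.one_apply, Subsingleton.elim i j]
  rw [h1]
  have : Invertible (1 : Matrix Unit Unit ℂ) := invertibleOne
  have key := fromBlocks_eq_of_invertible₂₂ T B C (1 : Matrix Unit Unit ℂ)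
  rw [invOf_one, Matrix.mul_one, Matrix.one_mul] at key
  have hBC : B * C = outerProd v := by
    ext i j
    simp [Matrix.mul_apply, hB, hC, outerProd]
  rw [hBC] at key
  have hdetL : IsUnit (fromBlocks (1 : Matrix (Fin N) (Fin N) ℂ) B 0
      (1 : Matrix Unit Unit ℂ)).det := by
    rw [det_fromBlocks_zero₂₁]
    simp
  have hdetR : IsUnit (fromBlocks (1 : Matrix (Fin N) (Fin N) ℂ) 0 C
      (1 : Matrix Unit Unit ℂ)).det := by
    rw [det_fromBlocks_zero₁₂]
    simp
  rw [key]
  rw [rank_mul_eq_left_of_isUnit_det _ _ hdetR,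
    rank_mul_eq_right_of_isUnit_det _ _ hdetL]
  exact aux_rank_blockdiag_one _



lemma aux_mulVec {N : ℕ} (lam : Fin N → ℝ) (c x : Fin N → ℂ) (i : Fin N) :
    ((Matrix.diagonal (fun i => (lam i : ℂ)) - outerProd c) *ᵥ x) i =
      (lam i : ℂ) * x i - c i * ∑ j, (starRingEnd ℂ) (c j) * x j := by
  rw [Matrix.sub_mulVec]
  simp only [Pi.sub_apply, Matrix.mulVec_diagonal]
  congr 1
  simp only [Matrix.mulVec, dotProduct, outerProd, Matrix.of_apply, Finset.mul_sum]
  apply Finset.sum_congr rfl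
  intro j _
  simp [Complex.star_def]
  ring

noncomputable def extMap {N : ℕ} (lam : Fin N → ℝ) :
    ({i : Fin N // lam i = 0} → ℂ) →ₗ[ℂ] (Fin N → ℂ) where
  toFun y := fun i => if h : lam i = 0 then y ⟨i, h⟩ else 0
  map_add' x y := by funext i; by_cases h : lam i = 0 <;> simp [h]
  map_smul' r x := by funext i; by_cases h : lam i = 0 <;> simp [h]

lemma extMap_inj {N : ℕ} (lam : Fin N → ℝ) : Function.Injective (extMap lam) := by
  intro x y h
  funext p
  have := congrFun h p.val
  simpa [extMap, p.prop] using this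

lemma aux_sum_kappa {N : ℕ} {lam : Fin N → ℝ} {c : Fin N → ℂ}
    (h1 : ∀ i, lam i = 0 → c i = 0) (t : ℂ) (x : Fin N → ℂ)
    (hx : ∀ j, lam j ≠ 0 → x j = t * c j / lam j) :
    ∑ j, (starRingEnd ℂ) (c j) * x j =
      t * ((∑ j, ‖c j‖ ^ 2 / lam j : ℝ) : ℂ) := by
  push_cast
  rw [Finset.mul_sum]
  apply Finset.sum_congr rfl
  intro j _
  by_cases hj : lam j = 0
  · simp [h1 j hj, hj]
  · rw [hx j hj]
    have habs : c j * (starRingEnd ℂ) (c j) = ((‖c j‖ : ℝ) : ℂ) ^ 2 := by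
      rw [Complex.mul_conj, Complex.normSq_eq_norm_sq]
      push_cast; ring
    field_simp
    rw [← habs]; ring

lemma aux_sum_supp {N : ℕ} {lam : Fin N → ℝ} (c x : Fin N → ℂ)
    (hx : ∀ i, lam i ≠ 0 → x i = 0) :
    ∑ j, (starRingEnd ℂ) (c j) * x j =
      ∑ p : {i : Fin N // lam i = 0}, (starRingEnd ℂ) (c p.val) * x p.val := by
  classical
  rw [← Finset.sum_subtype (Finset.univ.filter (fun i => lam i = 0))
      (by simp) (fun j => (starRingEnd ℂ) (c j) * x j)]
  symm
  apply Finset.sum_subset (Finset.filter_subset _ _)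
  intro i _ hi
  simp only [Finset.mem_filter, Finset.mem_univ, true_and] at hi
  rw [hx i hi, mul_zero]

lemma aux_caseC {N : ℕ} (lam : Fin N → ℝ) (c : Fin N → ℂ)
    (h1 : ∀ i, lam i = 0 → c i = 0)
    (h2 : (∑ j, ‖c j‖ ^ 2 / lam j) ≠ 1) :
    (Matrix.diagonal (fun i => (lam i : ℂ)) - outerProd c).rank +
      Fintype.card {i : Fin N // lam i = 0} = N := by
  classical
  set X := Matrix.diagonal (fun i => (lam i : ℂ)) - outerProd c with hX
  set s : ℝ := ∑ j, ‖c j‖ ^ 2 / lam j with hs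
  have hrange : LinearMap.range (extMap lam) = LinearMap.ker X.mulVecLin := by
    apply le_antisymm
    · rintro _ ⟨y, rfl⟩
      simp only [LinearMap.mem_ker]
      funext i
      rw [Matrix.mulVecLin_apply, aux_mulVec]
      have hzero : ∑ j, (starRingEnd ℂ) (c j) * (extMap lam) y j = 0 := by
        apply Finset.sum_eq_zero
        intro j _
        by_cases hj : lam j = 0
        · simp [h1 j hj]
        · simp [extMap, hj]
      rw [hzero, mul_zero, sub_zero]
      by_cases hi : lam i = 0
      · simp [hi]
      · simp [extMap, hi]
    · intro x hx
      have hx' : ∀ i, (lam i : ℂ) * x i - c i * ∑ j, (starRingEnd ℂ) (c j) * x j = 0 := by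
        intro i
        rw [← aux_mulVec lam c x i]
        exact congrFun (LinearMap.mem_ker.mp hx) i
      set t : ℂ := ∑ j, (starRingEnd ℂ) (c j) * x j with ht
      have hxf : ∀ i, lam i ≠ 0 → x i = t * c i / lam i := by
        intro i hi
        have := hx' i
        have hne : (lam i : ℂ) ≠ 0 := by exact_mod_cast hi
        rw [sub_eq_zero] at this
        field_simp
        linear_combination this
      have hts : t = t * (s : ℂ) :=
        ht.trans (aux_sum_kappa h1 t x hxf)
      have ht0 : t = 0 := by
        have : t * (1 - (s : ℂ)) = 0 := by linear_combination hts
        rcases mul_eq_zero.mp this with h | h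
        · exact h
        · exfalso
          apply h2
          have : (s : ℂ) = 1 := by linear_combination -h
          exact_mod_cast this
      refine ⟨fun p => x p.val, ?_⟩
      funext i
      by_cases hi : lam i = 0
      · simp [extMap, hi]
      · have := hxf i hi
        rw [ht0] at this
        simp only [zero_mul, zero_div] at this
        simp [extMap, hi, this]
  have key := aux_rank_compl X (extMap lam) (extMap_inj lam) hrange
  rw [Module.finrank_fintype_fun_eq_card, Fintype.card_fin] at key
  exact key

lemma aux_caseA {N : ℕ} (lam : Fin N → ℝ) (c : Fin N → ℂ)
    (h1 : ∀ i, lam i = 0 → c i = 0)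
    (h2 : (∑ j, ‖c j‖ ^ 2 / lam j) = 1) :
    (Matrix.diagonal (fun i => (lam i : ℂ)) - outerProd c).rank +
      (1 + Fintype.card {i : Fin N // lam i = 0}) = N := by
  classical
  set X := Matrix.diagonal (fun i => (lam i : ℂ)) - outerProd c with hX
  -- a witness index with lam ≠ 0 and c ≠ 0
  obtain ⟨i0, hi0, hc0⟩ : ∃ i, lam i ≠ 0 ∧ c i ≠ 0 := by
    by_contra hcon
    push_neg at hcon
    have : (∑ j, ‖c j‖ ^ 2 / lam j) = 0 := by
      apply Finset.sum_eq_zero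
      intro j _
      by_cases hj : lam j = 0
      · simp [h1 j hj]
      · simp [hcon j hj]
    rw [this] at h2; norm_num at h2
  -- the parametrizing map
  let Φ : (ℂ × ({i : Fin N // lam i = 0} → ℂ)) →ₗ[ℂ] (Fin N → ℂ) :=
    { toFun := fun p => fun i => if h : lam i = 0 then p.2 ⟨i, h⟩ else p.1 * c i / lam i
      map_add' := by
        intro p q; funext i; by_cases h : lam i = 0 <;> simp [h] <;> ring
      map_smul' := by
        intro r p; funext i; by_cases h : lam i = 0 <;> simp [h] <;> ring }
  have hΦx : ∀ (p : ℂ × ({i : Fin N // lam i = 0} → ℂ)) (j : Fin N), lam j ≠ 0 →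
      Φ p j = p.1 * c j / lam j := by
    intro p j hj
    simp [Φ, hj]
  have hinj : Function.Injective Φ := by
    intro p q h
    have h2' : p.2 = q.2 := by
      funext pp
      have := congrFun h pp.val
      simpa [Φ, pp.prop] using this
    have h1' : p.1 = q.1 := by
      have := congrFun h i0
      simp only [Φ, LinearMap.coe_mk, AddHom.coe_mk, dif_neg hi0] at this
      have hlne : (lam i0 : ℂ) ≠ 0 := by exact_mod_cast hi0
      rw [div_left_inj' hlne] at this
      exact mul_right_cancel₀ hc0 this
    exact Prod.ext h1' h2'
  have hrange : LinearMap.range Φ = LinearMap.ker X.mulVecLin := by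
    apply le_antisymm
    · rintro _ ⟨p, rfl⟩
      simp only [LinearMap.mem_ker]
      funext i
      rw [Matrix.mulVecLin_apply, aux_mulVec]
      have hk : ∑ j, (starRingEnd ℂ) (c j) * Φ p j = p.1 := by
        rw [aux_sum_kappa h1 p.1 (Φ p) (hΦx p), h2]
        push_cast; ring
      rw [hk]
      by_cases hi : lam i = 0
      · simp [Φ, hi, h1 i hi]
      · rw [hΦx p i hi]
        have hlne : (lam i : ℂ) ≠ 0 := by exact_mod_cast hi
        rw [Pi.zero_apply, mul_div_assoc', mul_div_cancel_left₀ _ hlne]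
        ring
    · intro x hx
      have hx' : ∀ i, (lam i : ℂ) * x i - c i * ∑ j, (starRingEnd ℂ) (c j) * x j = 0 := by
        intro i
        rw [← aux_mulVec lam c x i]
        exact congrFun (LinearMap.mem_ker.mp hx) i
      set t : ℂ := ∑ j, (starRingEnd ℂ) (c j) * x j with ht
      refine ⟨(t, fun p => x p.val), ?_⟩
      funext i
      by_cases hi : lam i = 0
      · simp [Φ, hi]
      · have := hx' i
        rw [sub_eq_zero] at this
        have hlne : (lam i : ℂ) ≠ 0 := by exact_mod_cast hi
        simp only [Φ, LinearMap.coe_mk, AddHom.coe_mk, dif_neg hi]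
        rw [div_eq_iff hlne]
        linear_combination -this
  have key := aux_rank_compl X Φ hinj hrange
  have hfr : Module.finrank ℂ (ℂ × ({i : Fin N // lam i = 0} → ℂ)) =
      1 + Fintype.card {i : Fin N // lam i = 0} := by
    rw [Module.finrank_prod, Module.finrank_self, Module.finrank_fintype_fun_eq_card]
  rw [hfr, Fintype.card_fin] at key
  exact key

lemma aux_caseB {N : ℕ} (lam : Fin N → ℝ) (c : Fin N → ℂ)
    (j : Fin N) (hj : lam j = 0) (hcj : c j ≠ 0) :
    (Matrix.diagonal (fun i => (lam i : ℂ)) - outerProd c).rank +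
      Fintype.card {i : Fin N // lam i = 0} = N + 1 := by
  classical
  set X := Matrix.diagonal (fun i => (lam i : ℂ)) - outerProd c with hX
  let ℓ : ({i : Fin N // lam i = 0} → ℂ) →ₗ[ℂ] ℂ :=
    { toFun := fun y => ∑ p, (starRingEnd ℂ) (c p.val) * y p
      map_add' := by intro a b; simp [mul_add, Finset.sum_add_distrib]
      map_smul' := by intro r a; simp [Finset.mul_sum]; apply Finset.sum_congr rfl; intros; ring }
  have hsurj : Function.Surjective ℓ := by
    intro z
    refine ⟨fun p => if p.val = j then z / (starRingEnd ℂ) (c j) else 0, ?_⟩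
    show (∑ p : {i : Fin N // lam i = 0}, _) = z
    rw [Finset.sum_eq_single (⟨j, hj⟩ : {i : Fin N // lam i = 0})]
    · have : (starRingEnd ℂ) (c j) ≠ 0 := by
        simpa using hcj
      simp only [if_pos]
      field_simp
    · intro p _ hp
      have : p.val ≠ j := fun h => hp (Subtype.ext h)
      simp [this]
    · intro h
      exact absurd (Finset.mem_univ _) h
  -- the sum identity for supported vectors
  have hsum : ∀ x : Fin N → ℂ, (∀ i, lam i ≠ 0 → x i = 0) →
      ∑ k, (starRingEnd ℂ) (c k) * x k = ℓ (fun p => x p.val) := by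
    intro x hx
    rw [aux_sum_supp c x hx]
    rfl
  let Φ : (LinearMap.ker ℓ) →ₗ[ℂ] (Fin N → ℂ) :=
    (extMap lam).comp (LinearMap.ker ℓ).subtype
  have hinj : Function.Injective Φ :=
    (extMap_inj lam).comp (Submodule.injective_subtype _)
  have hrange : LinearMap.range Φ = LinearMap.ker X.mulVecLin := by
    apply le_antisymm
    · rintro _ ⟨⟨y, hy⟩, rfl⟩
      simp only [LinearMap.mem_ker]
      show X.mulVecLin ((extMap lam) y) = 0
      funext i
      rw [Matrix.mulVecLin_apply, aux_mulVec]
      have hsupp : ∀ i, lam i ≠ 0 → (extMap lam) y i = 0 := by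
        intro i hi; simp [extMap, hi]
      have hzero : ∑ k, (starRingEnd ℂ) (c k) * (extMap lam) y k = 0 := by
        rw [hsum _ hsupp]
        have hyy : (fun p => (extMap lam) y p.val) = y := by
          funext p; simp [extMap, p.prop]
        rw [hyy]
        exact hy
      rw [hzero, mul_zero, sub_zero]
      by_cases hi : lam i = 0
      · simp [hi]
      · simp [hsupp i hi]
    · intro x hx
      have hx' : ∀ i, (lam i : ℂ) * x i - c i * ∑ k, (starRingEnd ℂ) (c k) * x k = 0 := by
        intro i
        rw [← aux_mulVec lam c x i]
        exact congrFun (LinearMap.mem_ker.mp hx) i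
      set t : ℂ := ∑ k, (starRingEnd ℂ) (c k) * x k with ht
      have ht0 : t = 0 := by
        have := hx' j
        rw [hj] at this
        simp only [Complex.ofReal_zero, zero_mul, zero_sub, neg_eq_zero] at this
        rcases mul_eq_zero.mp this with h | h
        · exact absurd h hcj
        · exact h
      have hsupp : ∀ i, lam i ≠ 0 → x i = 0 := by
        intro i hi
        have := hx' i
        rw [ht0, mul_zero, sub_zero] at this
        have hlne : (lam i : ℂ) ≠ 0 := by exact_mod_cast hi
        exact (mul_eq_zero.mp this).resolve_left hlne
      have hmem : (fun p : {i : Fin N // lam i = 0} => x p.val) ∈ LinearMap.ker ℓ := by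
        rw [LinearMap.mem_ker, ← hsum x hsupp, ← ht, ht0]
      refine ⟨⟨fun p => x p.val, hmem⟩, ?_⟩
      funext i
      by_cases hi : lam i = 0
      · simp [Φ, extMap, hi]
      · simp [Φ, extMap, hi, hsupp i hi]
  have key := aux_rank_compl X Φ hinj hrange
  rw [Fintype.card_fin] at key
  have hker : Module.finrank ℂ (LinearMap.ker ℓ) + 1 =
      Fintype.card {i : Fin N // lam i = 0} := by
    have h := LinearMap.finrank_range_add_finrank_ker ℓ
    rw [LinearMap.range_eq_top.mpr hsurj] at h
    rw [Module.finrank_fintype_fun_eq_card] at h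
    simp only [finrank_top, Module.finrank_self] at h
    omega
  omega


open scoped ComplexOrder in
theorem stmt_19 {N : ℕ} (T : Matrix (Fin N) (Fin N) ℂ) (hT : T.PosSemidef)
    (e : Fin N → Fin N → ℂ) (lam : Fin N → ℝ)
    (horth : ∀ i j, cip (e i) (e j) = if i = j then 1 else 0)
    (heig : ∀ i, T.mulVec (e i) = (lam i : ℂ) • e i)
    (v : Fin N → ℂ) :
    (Matrix.fromBlocks T (Matrix.of fun i (_ : Unit) => v i)
        (Matrix.of fun (_ : Unit) j => star (v j)) (Matrix.of fun _ _ => (1 : ℂ))).rank =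
        T.rank ↔
      ∃ a : Fin N → ℂ, (∀ i, ¬ 0 < lam i → a i = 0) ∧
        (∑ i, ‖a i‖ ^ 2 = 1) ∧
        v = ∑ i, (a i * (Real.sqrt (lam i) : ℂ)) • e i := by
  classical
  -- eigenvalues are nonnegative
  have hlam : ∀ i, 0 ≤ lam i := by
    intro i
    have h0 := hT.dotProduct_mulVec_nonneg (e i)
    rw [heig i] at h0
    have hdot : dotProduct (star (e i)) ((lam i : ℂ) • e i) = (lam i : ℂ) := by
      rw [dotProduct_smul]
      have : dotProduct (star (e i)) (e i) = 1 := by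
        have h := horth i i
        simp only [if_pos rfl] at h
        calc dotProduct (star (e i)) (e i)
            = (starRingEnd ℂ) (∑ j, e i j * star (e i j)) := by
              rw [map_sum]
              apply Finset.sum_congr rfl
              intro j _
              simp [dotProduct, Complex.star_def, mul_comm]
          _ = 1 := by rw [show (∑ j, e i j * star (e i j)) = cip (e i) (e i) from rfl, h]; simp
      rw [this, smul_eq_mul, mul_one]
    rw [hdot] at h0
    exact_mod_cast Complex.zero_le_real.mp h0
  have hnotpos : ∀ i, ¬ 0 < lam i ↔ lam i = 0 := by
    intro i
    constructor
    · intro h; exact le_antisymm (not_lt.mp h) (hlam i)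
    · intro h; rw [h]; exact lt_irrefl 0
  -- the unitary of eigenvectors
  set U : Matrix (Fin N) (Fin N) ℂ := Matrix.of fun j i => e i j with hU
  have hUU : Uᴴ * U = 1 := by
    ext i j
    rw [Matrix.mul_apply, Matrix.one_apply]
    calc ∑ k, Uᴴ i k * U k j = (starRingEnd ℂ) (∑ k, e i k * star (e j k)) := by
          rw [map_sum]
          apply Finset.sum_congr rfl
          intro k _
          simp only [hU, Matrix.conjTranspose_apply, Matrix.of_apply, Complex.star_def,
            _root_.map_mul, Complex.conj_conj]
      _ = (starRingEnd ℂ) (cip (e i) (e j)) := rfl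
      _ = if i = j then 1 else 0 := by
          rw [horth i j]
          split <;> simp
  have hU'U : U * Uᴴ = 1 := mul_eq_one_comm.mp hUU
  have hdetU : IsUnit U.det := Matrix.isUnit_det_of_left_inverse hUU
  have hdetUH : IsUnit Uᴴ.det := Matrix.isUnit_det_of_left_inverse hU'U
  set D : Matrix (Fin N) (Fin N) ℂ := Matrix.diagonal (fun i => (lam i : ℂ)) with hD
  have hTU : T * U = U * D := by
    ext j i
    rw [hD, Matrix.mul_diagonal]
    have h2 : (T *ᵥ (e i)) j = ∑ k, T j k * U k i := by
      simp [Matrix.mulVec, dotProduct, hU]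
    rw [Matrix.mul_apply, ← h2, heig i]
    simp [hU, mul_comm]
  have hT' : T = U * D * Uᴴ := by
    calc T = T * (U * Uᴴ) := by rw [hU'U, Matrix.mul_one]
      _ = (T * U) * Uᴴ := by rw [Matrix.mul_assoc]
      _ = (U * D) * Uᴴ := by rw [hTU]
  set c : Fin N → ℂ := fun i => ∑ j, (starRingEnd ℂ) (e i j) * v j with hc
  have hcU : c = Uᴴ *ᵥ v := by
    funext i
    simp [hc, hU, Matrix.mulVec, dotProduct, Matrix.conjTranspose_apply,
      Complex.star_def]
  have hvc : U *ᵥ c = v := by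
    rw [hcU, Matrix.mulVec_mulVec, hU'U, Matrix.one_mulVec]
  have hvsum : ∀ j, v j = ∑ i, c i * e i j := by
    intro j
    rw [← hvc]
    simp [Matrix.mulVec, dotProduct, hU, mul_comm]
  have houter : outerProd v = U * outerProd c * Uᴴ := by
    ext i j
    have hvi : v i = ∑ k, U i k * c k := by rw [← hvc]; rfl
    have hvj : v j = ∑ l, U j l * c l := by rw [← hvc]; rfl
    simp only [outerProd, Matrix.of_apply, Matrix.mul_apply, Matrix.conjTranspose_apply]
    rw [hvi, hvj, star_sum, Finset.sum_mul]
    simp only [Finset.mul_sum]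
    rw [Finset.sum_comm]
    apply Finset.sum_congr rfl
    intro l _
    rw [Finset.sum_mul]
    apply Finset.sum_congr rfl
    intro k _
    simp only [star_mul']
    ring
  -- the rank chain
  have hXconj : T - outerProd v = U * (D - outerProd c) * Uᴴ := by
    rw [Matrix.mul_sub, Matrix.sub_mul, ← hT', houter]
  have hrankX : (T - outerProd v).rank = (D - outerProd c).rank := by
    rw [hXconj, rank_mul_eq_left_of_isUnit_det _ _ hdetUH,
      rank_mul_eq_right_of_isUnit_det _ _ hdetU]
  have hrankT : T.rank = D.rank := by
    rw [hT', rank_mul_eq_left_of_isUnit_det _ _ hdetUH,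
      rank_mul_eq_right_of_isUnit_det _ _ hdetU]
  have hsplit : Fintype.card {i : Fin N // lam i = 0} +
      Fintype.card {i : Fin N // ¬ lam i = 0} = N := by
    rw [← Fintype.card_sum, Fintype.card_congr (Equiv.sumCompl _), Fintype.card_fin]
  have hrankD : D.rank + Fintype.card {i : Fin N // lam i = 0} = N := by
    rw [hD, Matrix.rank_diagonal]
    have hcongr : Fintype.card {i : Fin N // (fun i => (lam i : ℂ)) i ≠ 0} =
        Fintype.card {i : Fin N // ¬ lam i = 0} := by
      apply Fintype.card_congr
      apply Equiv.subtypeEquivRight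
      intro i
      simp [Complex.ofReal_eq_zero]
    rw [hcongr]
    omega
  have hmain : (Matrix.fromBlocks T (Matrix.of fun i (_ : Unit) => v i)
        (Matrix.of fun (_ : Unit) j => star (v j)) (Matrix.of fun _ _ => (1 : ℂ))).rank =
        T.rank ↔ (D - outerProd c).rank + 1 = D.rank := by
    rw [aux_rank_border, hrankX, hrankT]
  rw [hmain]
  -- the coefficient condition
  have hcond : (∃ a : Fin N → ℂ, (∀ i, ¬ 0 < lam i → a i = 0) ∧
        (∑ i, ‖a i‖ ^ 2 = 1) ∧
        v = ∑ i, (a i * (Real.sqrt (lam i) : ℂ)) • e i) ↔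
      ((∀ i, lam i = 0 → c i = 0) ∧ (∑ j, ‖c j‖ ^ 2 / lam j) = 1) := by
    constructor
    · rintro ⟨a, ha0, hasum, hav⟩
      have hck : ∀ k, c k = a k * (Real.sqrt (lam k) : ℂ) := by
        intro k
        rw [hc]
        calc ∑ j, (starRingEnd ℂ) (e k j) * v j
            = ∑ j, ∑ i, (a i * (Real.sqrt (lam i) : ℂ)) *
                ((starRingEnd ℂ) (e k j) * e i j) := by
              apply Finset.sum_congr rfl
              intro j _
              rw [hav]
              rw [Finset.sum_apply, Finset.mul_sum]
              apply Finset.sum_congr rfl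
              intro i _
              simp only [Pi.smul_apply, smul_eq_mul]
              ring
          _ = ∑ i, (a i * (Real.sqrt (lam i) : ℂ)) *
                (starRingEnd ℂ) (∑ j, e k j * star (e i j)) := by
              rw [Finset.sum_comm]
              apply Finset.sum_congr rfl
              intro i _
              rw [map_sum, Finset.mul_sum]
              apply Finset.sum_congr rfl
              intro j _
              simp only [Complex.star_def, _root_.map_mul, Complex.conj_conj]
          _ = ∑ i, (a i * (Real.sqrt (lam i) : ℂ)) * (if k = i then 1 else 0) := by
              apply Finset.sum_congr rfl
              intro i _
              rw [show (∑ j, e k j * star (e i j)) = cip (e k) (e i) from rfl, horth k i]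
              split <;> simp
          _ = a k * (Real.sqrt (lam k) : ℂ) := by
              simp only [mul_ite, mul_one, mul_zero]
              rw [Finset.sum_ite_eq]
              simp
      constructor
      · intro i hi
        rw [hck i, hi]
        simp
      · rw [← hasum]
        apply Finset.sum_congr rfl
        intro i _
        by_cases hi : lam i = 0
        · rw [hck i, hi]
          have ha : a i = 0 := ha0 i (by rw [hi]; exact lt_irrefl 0)
          simp [ha]
        · have hpos : 0 < lam i := lt_of_le_of_ne (hlam i) (Ne.symm hi)
          rw [hck i]
          rw [norm_mul, mul_pow]
          have habs : ‖((Real.sqrt (lam i) : ℂ))‖ ^ 2 = lam i := by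
            rw [Complex.norm_real, Real.norm_eq_abs, abs_of_nonneg (Real.sqrt_nonneg _), Real.sq_sqrt (hlam i)]
          rw [habs]
          field_simp
    · rintro ⟨h1, h2⟩
      refine ⟨fun i => if h : lam i = 0 then 0 else c i / (Real.sqrt (lam i) : ℂ), ?_, ?_, ?_⟩
      · intro i hi
        dsimp only
        rw [dif_pos ((hnotpos i).mp hi)]
      · rw [← h2]
        apply Finset.sum_congr rfl
        intro i _
        dsimp only
        by_cases hi : lam i = 0
        · rw [dif_pos hi, hi]
          simp [h1 i hi]
        · have hpos : 0 < lam i := lt_of_le_of_ne (hlam i) (Ne.symm hi)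
          rw [dif_neg hi, norm_div, div_pow]
          have habs : ‖((Real.sqrt (lam i) : ℂ))‖ ^ 2 = lam i := by
            rw [Complex.norm_real, Real.norm_eq_abs, abs_of_nonneg (Real.sqrt_nonneg _), Real.sq_sqrt (hlam i)]
          rw [habs]
      · funext j
        rw [hvsum j, Finset.sum_apply]
        apply Finset.sum_congr rfl
        intro i _
        simp only [Pi.smul_apply, smul_eq_mul]
        by_cases hi : lam i = 0
        · rw [dif_pos hi, h1 i hi]
          simp
        · have hpos : 0 < lam i := lt_of_le_of_ne (hlam i) (Ne.symm hi)
          rw [dif_neg hi]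
          have hsne : ((Real.sqrt (lam i) : ℂ)) ≠ 0 := by
            simp only [ne_eq, Complex.ofReal_eq_zero]
            exact ne_of_gt (Real.sqrt_pos.mpr hpos)
          field_simp
  rw [hcond]
  -- final case analysis
  by_cases h1 : ∀ i, lam i = 0 → c i = 0
  · by_cases h2 : (∑ j, ‖c j‖ ^ 2 / lam j) = 1
    · have hA := aux_caseA lam c h1 h2
      rw [← hD] at hA
      have hcard := Fintype.card_subtype_le (fun i : Fin N => lam i = 0)
      rw [Fintype.card_fin] at hcard
      refine iff_of_true ?_ ⟨h1, h2⟩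
      omega
    · have hC := aux_caseC lam c h1 h2
      rw [← hD] at hC
      refine iff_of_false ?_ ?_
      · omega
      · rintro ⟨_, hs⟩; exact h2 hs
  · push_neg at h1
    obtain ⟨j, hj, hcj⟩ := h1
    have hB := aux_caseB lam c j hj hcj
    rw [← hD] at hB
    refine iff_of_false ?_ ?_
    · omega
    · rintro ⟨hh, _⟩; exact hcj (hh j hj)
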